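/- arXiv:1811.07450 — 2 statements merged into one kernel-verified Lean document; each statement's English description precedes it below -/
import Mathlib

section
/- For every ε ∈ (0, 1) there is a constant κ_ε > 0 such that for all sufficiently large λ = e^s, all α, β ∈ 𝔸 and all θ ∈ Θ, the set Z^{B,ε,λ}_{α,β,θ} is κ_ε-dominated by K¹_s ∪ Ǩ¹_s ∪ K²_s ∪ Ǩ²_s. -/
open MeasureTheory Filter Set
open scoped ENNReal Topology

noncomputable section

/-- `η = a + ib`. -/
def etaC (a b : ℝ) : ℂ := (a : ℂ) + (b : ℂ) * Complex.I

/-- The open sector `S = {u+iv : v > 0, bu + av > 0}`. -/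
def sectorS (a b : ℝ) : Set ℂ := {z : ℂ | 0 < z.im ∧ 0 < b * z.re + a * z.im}

/-- The ring `𝔸 = {α : e^{-2πb} < |α| ≤ 1}`. -/
def ringA (b : ℝ) : Set ℂ :=
  {α : ℂ | Real.exp (-(2 * Real.pi * b)) < ‖α‖ ∧ ‖α‖ ≤ 1}

/-- The parametrization `x(α, ζ) = (α e^{iη(ζ + b⁻¹ log|α|)}, e^{i(ζ + b⁻¹ log|α|)})` of the
leaf `L_α` near a hyperbolic singularity. -/
def xmap (a b : ℝ) (α ζ : ℂ) : ℂ × ℂ :=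
  (α * Complex.exp (Complex.I * etaC a b * (ζ + ((Real.log (‖α‖) / b : ℝ) : ℂ))),
   Complex.exp (Complex.I * (ζ + ((Real.log (‖α‖) / b : ℝ) : ℂ))))

/-- The parameter region `Θ = {θ : |θ₁ - 1| < ε₀, |θ₂ - 1| < ε₀}`. -/
def thetaSet (e0 : ℝ) : Set (ℂ × ℂ) :=
  {θ : ℂ × ℂ | ‖θ.1 - 1‖ < e0 ∧ ‖θ.2 - 1‖ < e0}

/-- The solution set `Z^λ_{α,β,θ} = {(ζ, ζ̌) ∈ S × S : x(α,ζ) - x(β,ζ̌) = θ/λ}`. -/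
def solSet (a b : ℝ) (α β : ℂ) (θ : ℂ × ℂ) (lam : ℝ) : Set (ℂ × ℂ) :=
  {p : ℂ × ℂ | p.1 ∈ sectorS a b ∧ p.2 ∈ sectorS a b ∧
    (xmap a b α p.1).1 - (xmap a b β p.2).1 = θ.1 / (lam : ℂ) ∧
    (xmap a b α p.1).2 - (xmap a b β p.2).2 = θ.2 / (lam : ℂ)}

/-- The ratio `ρ₁ = x₁/y₁` at a solution `p = (ζ, ζ̌)`. -/
def rho1 (a b : ℝ) (α β : ℂ) (p : ℂ × ℂ) : ℂ := (xmap a b α p.1).1 / (xmap a b β p.2).1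

/-- The ratio `ρ₂ = x₂/y₂` at a solution `p = (ζ, ζ̌)`. -/
def rho2 (a b : ℝ) (α β : ℂ) (p : ℂ × ℂ) : ℂ := (xmap a b α p.1).2 / (xmap a b β p.2).2

/-- The subset `Z^{B,ε,λ}_{α,β,θ}` of solutions for which exactly one of the inequalities
`|ρ₁ - 1| ≤ ε`, `|ρ₂ - 1| ≤ ε` holds. -/
def solB (a b : ℝ) (α β : ℂ) (θ : ℂ × ℂ) (lam ε : ℝ) : Set (ℂ × ℂ) :=
  {p ∈ solSet a b α β θ lam |
    Xor' (‖rho1 a b α β p - 1‖ ≤ ε) (‖rho2 a b α β p - 1‖ ≤ ε)}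

/-- The segment `Λ⁰_{1,s}` joining `-η̄ b⁻¹ s` and `ζ_s = (1-η̄) b⁻¹ s`. -/
def lam1Seg (a b s : ℝ) : Set ℂ :=
  {z : ℂ | ∃ l : ℝ, 0 ≤ l ∧ l ≤ s / b ∧
    z = -(starRingEnd ℂ (etaC a b)) * ((s / b : ℝ) : ℂ) + (l : ℂ)}

/-- The segment `Λ⁰_{2,s}` joining `b⁻¹ s` and `ζ_s = (1-η̄) b⁻¹ s`. -/
def lam2Seg (a b s : ℝ) : Set ℂ :=
  {z : ℂ | ∃ l : ℝ, 0 ≤ l ∧ l ≤ s / b ∧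
    z = ((s / b : ℝ) : ℂ) - (starRingEnd ℂ (etaC a b)) * (l : ℂ)}

/-- `K¹_s = {(ζ, ζ̌) : ζ ∈ Λ⁰_{1,s}, ζ̌ ∈ ζ - η̄ ℝ_{≥0}}`. -/
def K1Set (a b s : ℝ) : Set (ℂ × ℂ) :=
  {p : ℂ × ℂ | p.1 ∈ lam1Seg a b s ∧
    ∃ l : ℝ, 0 ≤ l ∧ p.2 = p.1 - starRingEnd ℂ (etaC a b) * (l : ℂ)}

/-- `Ǩ¹_s = {(ζ, ζ̌) : ζ̌ ∈ Λ⁰_{1,s}, ζ ∈ ζ̌ - η̄ ℝ_{≥0}}`. -/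
def K1Set' (a b s : ℝ) : Set (ℂ × ℂ) :=
  {p : ℂ × ℂ | p.2 ∈ lam1Seg a b s ∧
    ∃ l : ℝ, 0 ≤ l ∧ p.1 = p.2 - starRingEnd ℂ (etaC a b) * (l : ℂ)}

/-- `K²_s = {(ζ, ζ̌) : ζ ∈ Λ⁰_{2,s}, ζ̌ ∈ ζ + ℝ_{≥0}}`. -/
def K2Set (a b s : ℝ) : Set (ℂ × ℂ) :=
  {p : ℂ × ℂ | p.1 ∈ lam2Seg a b s ∧ ∃ l : ℝ, 0 ≤ l ∧ p.2 = p.1 + (l : ℂ)}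

/-- `Ǩ²_s = {(ζ, ζ̌) : ζ̌ ∈ Λ⁰_{2,s}, ζ ∈ ζ̌ + ℝ_{≥0}}`. -/
def K2Set' (a b s : ℝ) : Set (ℂ × ℂ) :=
  {p : ℂ × ℂ | p.2 ∈ lam2Seg a b s ∧ ∃ l : ℝ, 0 ≤ l ∧ p.1 = p.2 + (l : ℂ)}

/-- A set `Z` is `κ`-dominated by `Z'`: every point of `Z` lies at distance `≤ κ` from `Z'`. -/
def SetDomBySet {α : Type*} [PseudoMetricSpace α] (κ : ℝ) (Z Z' : Set α) : Prop :=
  ∀ x ∈ Z, ∃ y ∈ Z', dist x y ≤ κ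

def mkC (a b h v : ℝ) : ℂ := ((h - a*v)/b : ℝ) + (v : ℝ) * Complex.I

lemma mkC_im (a b h v : ℝ) : (mkC a b h v).im = v := by simp [mkC]

lemma mkC_hv (a b h v : ℝ) (hb : b ≠ 0) : b * (mkC a b h v).re + a * (mkC a b h v).im = h := by
  simp [mkC]; field_simp; ring

lemma im_sub_conj (a b l : ℝ) (z : ℂ) :
    (z - (starRingEnd ℂ) (etaC a b) * (l:ℂ)).im = z.im + b * l := by
  simp [etaC]

lemma hv_sub_conj (a b l : ℝ) (z : ℂ) :
    b * (z - (starRingEnd ℂ) (etaC a b) * (l:ℂ)).re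
      + a * (z - (starRingEnd ℂ) (etaC a b) * (l:ℂ)).im = b * z.re + a * z.im := by
  simp [etaC]; ring

lemma im_add_real (l : ℝ) (z : ℂ) : (z + (l:ℂ)).im = z.im := by simp

lemma hv_add_real (a b l : ℝ) (z : ℂ) :
    b * (z + (l:ℂ)).re + a * (z + (l:ℂ)).im = (b * z.re + a * z.im) + b * l := by
  simp; ring

lemma mem_lam1 {a b s : ℝ} (hb : 0 < b) {z : ℂ} (him : z.im = s)
    (h0 : 0 ≤ b * z.re + a * z.im) (h1 : b * z.re + a * z.im ≤ s) :
    z ∈ lam1Seg a b s := by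
  refine ⟨(b * z.re + a * z.im)/b, div_nonneg h0 hb.le,
    (div_le_div_iff_of_pos_right hb).2 h1, ?_⟩
  apply Complex.ext
  · simp [etaC]
    field_simp
    rw [him]; ring
  · simp [etaC]
    rw [him]
    field_simp

lemma mem_lam2 {a b s : ℝ} (hb : 0 < b) {z : ℂ} (h0 : 0 ≤ z.im) (h1 : z.im ≤ s)
    (hh : b * z.re + a * z.im = s) : z ∈ lam2Seg a b s := by
  refine ⟨z.im/b, div_nonneg h0 hb.le, (div_le_div_iff_of_pos_right hb).2 h1, ?_⟩
  apply Complex.ext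
  · simp [etaC]
    field_simp
    linarith [hh]
  · simp [etaC]
    field_simp

lemma xmap_abs_fst (a b : ℝ) (hb : 0 < b) (α ζ : ℂ) (hα : 0 < ‖α‖) :
    ‖(xmap a b α ζ).1‖ = Real.exp (-(b*ζ.re + a*ζ.im)) := by
  show ‖(α * Complex.exp _)‖ = _
  rw [norm_mul, Complex.norm_exp]
  have hre : (Complex.I * etaC a b * (ζ + ((Real.log (‖α‖) / b : ℝ) : ℂ))).re
      = -(b*ζ.re + a*ζ.im) - Real.log (‖α‖) := by
    simp [etaC, Complex.mul_re, Complex.mul_im, Complex.add_re, Complex.add_im]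
    field_simp
    ring
  rw [hre, Real.exp_sub, Real.exp_log hα]
  field_simp

lemma xmap_abs_snd (a b : ℝ) (α ζ : ℂ) :
    ‖(xmap a b α ζ).2‖ = Real.exp (-ζ.im) := by
  show ‖(Complex.exp _)‖ = _
  rw [Complex.norm_exp]
  congr 1
  simp

lemma dist_le_of {a b : ℝ} (hb : 0 < b) (z w : ℂ) {H V : ℝ}
    (hH : |(b*z.re + a*z.im) - (b*w.re + a*w.im)| ≤ H)
    (hV : |z.im - w.im| ≤ V) :
    dist z w ≤ (H + |a| * V) / b + V := by
  rw [Complex.dist_eq]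
  have hre : |z.re - w.re| ≤ (H + |a| * V)/b := by
    rw [le_div_iff₀ hb]
    have e : (z.re - w.re) * b = ((b*z.re + a*z.im) - (b*w.re + a*w.im)) - a*(z.im - w.im) := by
      ring
    have s1 : |z.re - w.re| * b = abs (((b*z.re + a*z.im) - (b*w.re + a*w.im)) - a*(z.im - w.im)) := by
      rw [← e, abs_mul, abs_of_pos hb]
    have s2 : abs (((b*z.re + a*z.im) - (b*w.re + a*w.im)) - a*(z.im - w.im))
        ≤ abs ((b*z.re + a*z.im) - (b*w.re + a*w.im)) + abs (a*(z.im - w.im)) := abs_sub _ _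
    have s3 : abs (a*(z.im - w.im)) ≤ |a| * V := by
      rw [abs_mul]
      exact mul_le_mul_of_nonneg_left hV (abs_nonneg a)
    linarith
  calc ‖(z-w)‖ ≤ |(z-w).re| + |(z-w).im| := Complex.norm_le_abs_re_add_abs_im _
    _ = |z.re - w.re| + |z.im - w.im| := by rw [Complex.sub_re, Complex.sub_im]
    _ ≤ (H + |a| * V)/b + V := add_le_add hre hV

-- scalar lemmas
lemma exp_le_bound {ε t : ℝ} (hε : 0 < ε) (hε1 : ε < 1)
    (h : Real.exp t ≤ 6 / (ε * (1 - ε))) : t ≤ Real.log (6 / (ε * (1 - ε))) :=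
  (Real.le_log_iff_exp_le (lt_of_lt_of_le (Real.exp_pos t) h)).2 h

lemma lem_a {ε s A u : ℝ} (hε : 0 < ε) (hε1 : ε < 1)
    (hA : (1/2) * Real.exp (-s) ≤ A) (h : A * Real.exp u ≤ ε) :
    u - s ≤ Real.log (6 / (ε * (1 - ε))) := by
  apply exp_le_bound hε hε1
  have hεε : 0 < ε * (1 - ε) := by nlinarith
  have e1 : Real.exp (u - s) = Real.exp u * Real.exp (-s) := by
    rw [← Real.exp_add]; ring_nf
  have h2 : (1/2) * Real.exp (-s) * Real.exp u ≤ ε :=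
    le_trans (mul_le_mul_of_nonneg_right hA (Real.exp_pos u).le) h
  have h3 : Real.exp (u - s) ≤ 2 * ε := by rw [e1]; nlinarith
  have hd : 2 * ε ≤ 6 / (ε * (1-ε)) := by
    rw [le_div_iff₀ hεε]; nlinarith
  linarith

lemma lem_c {ε s A u : ℝ} (hε : 0 < ε) (hε1 : ε < 1)
    (hA : A ≤ (3/2) * Real.exp (-s)) (h : ε < A * Real.exp u) :
    s - u ≤ Real.log (6 / (ε * (1 - ε))) := by
  apply exp_le_bound hε hε1
  have hεε : 0 < ε * (1 - ε) := by nlinarith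
  have e1 : Real.exp (s - u) * (Real.exp (-s) * Real.exp u) = 1 := by
    rw [← Real.exp_add, ← Real.exp_add]; norm_num
  have h2 : ε < (3/2) * (Real.exp (-s) * Real.exp u) := by
    have := mul_le_mul_of_nonneg_right hA (Real.exp_pos u).le
    nlinarith [Real.exp_pos u]
  have h3 : Real.exp (s-u) * ε ≤ 3/2 := by
    nlinarith [Real.exp_pos (s-u), mul_lt_mul_of_pos_left h2 (Real.exp_pos (s-u))]
  rw [le_div_iff₀ hεε]
  nlinarith [Real.exp_pos (s-u)]

lemma lem_d {ε s A u1 u2 : ℝ} (hε : 0 < ε) (hε1 : ε < 1)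
    (hA : A ≤ (3/2) * Real.exp (-s)) (h : ε < A * Real.exp u2)
    (htri : Real.exp (-u1) ≤ A + Real.exp (-u2)) :
    s - u1 ≤ Real.log (6 / (ε * (1 - ε))) := by
  apply exp_le_bound hε hε1
  have hεε : 0 < ε * (1 - ε) := by nlinarith
  have e2 : Real.exp (-u2) * Real.exp u2 = 1 := by rw [← Real.exp_add]; norm_num
  have hA' : ε * Real.exp (-u2) < A := by
    have e3 : Real.exp (-u2) * (A * Real.exp u2) = A := by
      rw [show Real.exp (-u2) * (A * Real.exp u2) = A * (Real.exp (-u2) * Real.exp u2) by ring,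
        e2, mul_one]
    nlinarith [mul_lt_mul_of_pos_left h (Real.exp_pos (-u2))]
  have h2 : ε * Real.exp (-u2) ≤ (3/2) * Real.exp (-s) := hA'.le.trans hA
  have h3 : ε * Real.exp (-u1) ≤ 3 * Real.exp (-s) := by
    nlinarith [mul_le_mul_of_nonneg_left htri hε.le, Real.exp_pos (-s)]
  have eS : Real.exp s * Real.exp (-s) = 1 := by rw [← Real.exp_add]; norm_num
  have eU : Real.exp (s-u1) = Real.exp s * Real.exp (-u1) := by
    rw [← Real.exp_add]; ring_nf
  rw [le_div_iff₀ hεε]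
  nlinarith [Real.exp_pos (s - u1), Real.exp_pos (-u1), Real.exp_pos s,
    mul_le_mul_of_nonneg_left h3 (Real.exp_pos s).le]

lemma lem_e {ε s A u1 u2 : ℝ} (hε : 0 < ε) (hε1 : ε < 1)
    (hA : (1/2) * Real.exp (-s) ≤ A)
    (htri : A ≤ Real.exp (-u1) + Real.exp (-u2)) (hle : u1 ≤ u2) :
    u1 - s ≤ Real.log (6/(ε*(1-ε))) := by
  apply exp_le_bound hε hε1
  have hεε : 0 < ε * (1 - ε) := by nlinarith
  have h1 : Real.exp (-u2) ≤ Real.exp (-u1) := Real.exp_le_exp.2 (by linarith)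
  have e1 : Real.exp (u1 - s) = Real.exp u1 * Real.exp (-s) := by
    rw [← Real.exp_add]; ring_nf
  have e2 : Real.exp u1 * Real.exp (-u1) = 1 := by rw [← Real.exp_add]; norm_num
  have hcomb : (1/2) * Real.exp (-s) ≤ 2 * Real.exp (-u1) := by linarith
  have h2 : Real.exp (u1 - s) ≤ 4 := by
    nlinarith [mul_le_mul_of_nonneg_left hcomb (Real.exp_pos u1).le]
  have : (4:ℝ) ≤ 6/(ε*(1-ε)) := by
    rw [le_div_iff₀ hεε]; nlinarith [sq_nonneg (ε - 1/2)]
  linarith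

lemma lem_b {ε t : ℝ} (hε : 0 < ε) (hε1 : ε < 1)
    (hlow : 1 - ε ≤ Real.exp t) (hhigh : Real.exp t ≤ 1 + ε) :
    |t| ≤ Real.log (6/(ε*(1-ε))) := by
  have hεε : 0 < ε * (1 - ε) := by nlinarith
  rw [abs_le]
  constructor
  · have hneg : -t ≤ Real.log (6/(ε*(1-ε))) := by
      apply exp_le_bound hε hε1
      have e : Real.exp (-t) * Real.exp t = 1 := by rw [← Real.exp_add]; norm_num
      rw [le_div_iff₀ hεε]
      nlinarith [Real.exp_pos (-t), mul_le_mul_of_nonneg_left hlow (Real.exp_pos (-t)).le]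
    linarith
  · apply exp_le_bound hε hε1
    have : (1:ℝ) + ε ≤ 6/(ε*(1-ε)) := by
      rw [le_div_iff₀ hεε]; nlinarith
    linarith

set_option maxHeartbeats 3200000 in
/-- for every `ε ∈ (0,1)` there is `κ_ε > 0` such that, for all sufficiently
large `λ = e^s`, the set `Z^{B,ε,λ}_{α,β,θ}` is `κ_ε`-dominated by
`K¹_s ∪ Ǩ¹_s ∪ K²_s ∪ Ǩ²_s`, uniformly in `α, β ∈ 𝔸` and `θ ∈ Θ`. -/
theorem stmt13 (a b : ℝ) (hb : 0 < b) :
    ∃ e0 : ℝ, 0 < e0 ∧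
      ∀ ε : ℝ, 0 < ε → ε < 1 →
        ∃ κ : ℝ, 0 < κ ∧ ∃ s₀ : ℝ, ∀ s : ℝ, s₀ ≤ s →
          ∀ α ∈ ringA b, ∀ β ∈ ringA b, ∀ θ ∈ thetaSet e0,
            SetDomBySet κ (solB a b α β θ (Real.exp s) ε)
              (K1Set a b s ∪ K1Set' a b s ∪ K2Set a b s ∪ K2Set' a b s) := by

  classical
  refine ⟨1/2, by norm_num, ?_⟩
  intro ε hε hε1
  have hεε : 0 < ε * (1 - ε) := by nlinarith
  set L : ℝ := Real.log (6 / (ε * (1 - ε))) with hLdef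
  have hL0 : 0 < L := by
    rw [hLdef]
    apply Real.log_pos
    rw [lt_div_iff₀ hεε]; nlinarith
  refine ⟨(3*L + |a| * (3*L)) / b + 3*L, ?_, 0, ?_⟩
  · have h1 : 0 ≤ (3*L + |a| * (3*L)) / b := by
      apply div_nonneg _ hb.le
      have h2 := abs_nonneg a
      nlinarith
    linarith
  intro s hs α hα β hβ θ hθ p hp
  obtain ⟨hpS, hpX⟩ := hp
  obtain ⟨⟨hv1pos, hh1pos⟩, ⟨hv2pos, hh2pos⟩, hE1, hE2⟩ := hpS
  have hα0 : 0 < ‖α‖ := lt_trans (Real.exp_pos _) hα.1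
  have hβ0 : 0 < ‖β‖ := lt_trans (Real.exp_pos _) hβ.1
  obtain ⟨ht1, ht2⟩ := hθ
  set v1 := p.1.im with hv1def
  set v2 := p.2.im with hv2def
  set h1 := b * p.1.re + a * p.1.im with hh1def
  set h2 := b * p.2.re + a * p.2.im with hh2def
  have hx1 : ‖(xmap a b α p.1).1‖ = Real.exp (-h1) := xmap_abs_fst a b hb α p.1 hα0
  have hy1 : ‖(xmap a b β p.2).1‖ = Real.exp (-h2) := xmap_abs_fst a b hb β p.2 hβ0
  have hx2 : ‖(xmap a b α p.1).2‖ = Real.exp (-v1) := xmap_abs_snd a b α p.1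
  have hy2 : ‖(xmap a b β p.2).2‖ = Real.exp (-v2) := xmap_abs_snd a b β p.2
  -- bounds on |θᵢ|
  have hθ1u : ‖θ.1‖ ≤ 3/2 := by
    have h := norm_add_le (θ.1 - 1) 1
    have e : θ.1 - 1 + 1 = θ.1 := by ring
    rw [e, norm_one] at h
    linarith
  have hθ1l : 1/2 ≤ ‖θ.1‖ := by
    have h := norm_add_le θ.1 (1 - θ.1)
    have e : θ.1 + (1 - θ.1) = 1 := by ring
    rw [e, norm_one] at h
    have e2 : ‖(1 - θ.1)‖ = ‖(θ.1 - 1)‖ := norm_sub_rev _ _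
    rw [e2] at h
    linarith
  have hθ2u : ‖θ.2‖ ≤ 3/2 := by
    have h := norm_add_le (θ.2 - 1) 1
    have e : θ.2 - 1 + 1 = θ.2 := by ring
    rw [e, norm_one] at h
    linarith
  have hθ2l : 1/2 ≤ ‖θ.2‖ := by
    have h := norm_add_le θ.2 (1 - θ.2)
    have e : θ.2 + (1 - θ.2) = 1 := by ring
    rw [e, norm_one] at h
    have e2 : ‖(1 - θ.2)‖ = ‖(θ.2 - 1)‖ := norm_sub_rev _ _
    rw [e2] at h
    linarith
  set A1 := ‖((xmap a b α p.1).1 - (xmap a b β p.2).1)‖ with hA1def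
  set A2 := ‖((xmap a b α p.1).2 - (xmap a b β p.2).2)‖ with hA2def
  have hA1 : A1 = ‖θ.1‖ * Real.exp (-s) := by
    rw [hA1def, hE1, norm_div, Complex.norm_real, Real.norm_eq_abs, abs_of_pos (Real.exp_pos s), Real.exp_neg,
      div_eq_mul_inv]
  have hA2 : A2 = ‖θ.2‖ * Real.exp (-s) := by
    rw [hA2def, hE2, norm_div, Complex.norm_real, Real.norm_eq_abs, abs_of_pos (Real.exp_pos s), Real.exp_neg,
      div_eq_mul_inv]
  have hA1l : (1/2) * Real.exp (-s) ≤ A1 := by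
    rw [hA1]; exact mul_le_mul_of_nonneg_right hθ1l (Real.exp_pos _).le
  have hA1u : A1 ≤ (3/2) * Real.exp (-s) := by
    rw [hA1]; exact mul_le_mul_of_nonneg_right hθ1u (Real.exp_pos _).le
  have hA2l : (1/2) * Real.exp (-s) ≤ A2 := by
    rw [hA2]; exact mul_le_mul_of_nonneg_right hθ2l (Real.exp_pos _).le
  have hA2u : A2 ≤ (3/2) * Real.exp (-s) := by
    rw [hA2]; exact mul_le_mul_of_nonneg_right hθ2u (Real.exp_pos _).le
  have hβne : β ≠ 0 := by
    intro h; rw [h] at hβ0; simp at hβ0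
  have hy1ne : (xmap a b β p.2).1 ≠ 0 := by
    simp only [xmap]
    exact mul_ne_zero hβne (Complex.exp_ne_zero _)
  have hy2ne : (xmap a b β p.2).2 ≠ 0 := Complex.exp_ne_zero _
  have hr1 : ‖(rho1 a b α β p - 1)‖ = A1 * Real.exp h2 := by
    unfold rho1
    rw [div_sub_one hy1ne, norm_div, ← hA1def, hy1, Real.exp_neg]
    field_simp
  have hr2 : ‖(rho2 a b α β p - 1)‖ = A2 * Real.exp v2 := by
    unfold rho2
    rw [div_sub_one hy2ne, norm_div, ← hA2def, hy2, Real.exp_neg]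
    field_simp
  have habsr1 : ‖(rho1 a b α β p)‖ = Real.exp (h2 - h1) := by
    unfold rho1
    rw [norm_div, hx1, hy1, ← Real.exp_sub]
    ring_nf
  have habsr2 : ‖(rho2 a b α β p)‖ = Real.exp (v2 - v1) := by
    unfold rho2
    rw [norm_div, hx2, hy2, ← Real.exp_sub]
    ring_nf
  have htri1 : Real.exp (-h1) ≤ A1 + Real.exp (-h2) := by
    have h := norm_add_le ((xmap a b α p.1).1 - (xmap a b β p.2).1) ((xmap a b β p.2).1)
    have e : (xmap a b α p.1).1 - (xmap a b β p.2).1 + (xmap a b β p.2).1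
        = (xmap a b α p.1).1 := by ring
    rw [e, ← hA1def, hx1, hy1] at h
    exact h
  have htri1' : A1 ≤ Real.exp (-h1) + Real.exp (-h2) := by
    have h := norm_add_le (xmap a b α p.1).1 (-(xmap a b β p.2).1)
    rw [← sub_eq_add_neg, norm_neg, ← hA1def, hx1, hy1] at h
    exact h
  have htri2 : Real.exp (-v1) ≤ A2 + Real.exp (-v2) := by
    have h := norm_add_le ((xmap a b α p.1).2 - (xmap a b β p.2).2) ((xmap a b β p.2).2)
    have e : (xmap a b α p.1).2 - (xmap a b β p.2).2 + (xmap a b β p.2).2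
        = (xmap a b α p.1).2 := by ring
    rw [e, ← hA2def, hx2, hy2] at h
    exact h
  have htri2' : A2 ≤ Real.exp (-v1) + Real.exp (-v2) := by
    have h := norm_add_le (xmap a b α p.1).2 (-(xmap a b β p.2).2)
    rw [← sub_eq_add_neg, norm_neg, ← hA2def, hx2, hy2] at h
    exact h
  rcases hpX with ⟨hc1, hnc2⟩ | ⟨hc2, hnc1⟩
  · -- Case B : |ρ₁ - 1| ≤ ε only; solutions near K¹ ∪ Ǩ¹
    rw [hr1] at hc1
    rw [hr2] at hnc2
    have hnc2' : ε < A2 * Real.exp v2 := not_le.1 hnc2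
    have hBa : h2 - s ≤ L := by rw [hLdef]; exact lem_a hε hε1 hA1l hc1
    have hBb : |h1 - h2| ≤ L := by
      have hup : Real.exp (h2 - h1) ≤ 1 + ε := by
        rw [← habsr1]
        have h := norm_add_le (rho1 a b α β p - 1) 1
        have e : rho1 a b α β p - 1 + 1 = rho1 a b α β p := by ring
        rw [e, norm_one, hr1] at h
        linarith
      have hlow : 1 - ε ≤ Real.exp (h2 - h1) := by
        rw [← habsr1]
        have h := norm_add_le (rho1 a b α β p) (1 - rho1 a b α β p)
        have e : rho1 a b α β p + (1 - rho1 a b α β p) = 1 := by ring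
        rw [e, norm_one] at h
        have e2 : ‖(1 - rho1 a b α β p)‖ = ‖(rho1 a b α β p - 1)‖ :=
          norm_sub_rev _ _
        rw [e2, hr1] at h
        linarith
      have h := lem_b hε hε1 hlow hup
      rw [abs_sub_comm] at h
      rw [hLdef]; exact h
    have hBc : s - v2 ≤ L := by rw [hLdef]; exact lem_c hε hε1 hA2u hnc2'
    have hBd : s - v1 ≤ L := by rw [hLdef]; exact lem_d hε hε1 hA2u hnc2' htri2
    obtain ⟨hBb1, hBb2⟩ := abs_le.1 hBb
    rcases le_total v1 v2 with hle | hle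
    · -- K¹ : ζ near Λ⁰₁
      have hBe : v1 - s ≤ L := by rw [hLdef]; exact lem_e hε hε1 hA2l htri2' hle
      set h' := min h1 s with hh'
      set l := (max s v2 - s)/b with hl
      set z1 : ℂ := mkC a b h' s with hz1
      set z2 : ℂ := z1 - (starRingEnd ℂ) (etaC a b) * (l:ℂ) with hz2
      have hz1v : z1.im = s := mkC_im a b h' s
      have hz1h : b * z1.re + a * z1.im = h' := mkC_hv a b h' s hb.ne'
      have hlnn : 0 ≤ l := by
        rw [hl]; apply div_nonneg _ hb.le; linarith [le_max_left s v2]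
      have hz2v : z2.im = max s v2 := by
        rw [hz2, im_sub_conj, hz1v, hl]; field_simp; ring
      have hz2h : b * z2.re + a * z2.im = h' := by rw [hz2, hv_sub_conj]; exact hz1h
      have hmem : z1 ∈ lam1Seg a b s := by
        apply mem_lam1 hb hz1v
        · rw [hz1h]; exact le_min hh1pos.le hs
        · rw [hz1h]; exact min_le_right _ _
      refine ⟨(z1, z2), Or.inl (Or.inl (Or.inl ⟨hmem, l, hlnn, hz2⟩)), ?_⟩
      have hminle : h' ≤ h1 := min_le_left _ _
      have hminge : h1 - 2*L ≤ h' := le_min (by linarith) (by linarith)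
      have hmaxle : max s v2 ≤ v2 + L := max_le (by linarith) (by linarith)
      have hmaxge : v2 ≤ max s v2 := le_max_right _ _
      rw [Prod.dist_eq]
      apply max_le
      · refine dist_le_of hb p.1 z1 (H := 3*L) (V := 3*L) ?_ ?_
        · rw [hz1h, ← hh1def, abs_le]; constructor <;> linarith
        · rw [hz1v, ← hv1def, abs_le]; constructor <;> linarith
      · refine dist_le_of hb p.2 z2 (H := 3*L) (V := 3*L) ?_ ?_
        · rw [hz2h, ← hh2def, abs_le]; constructor <;> linarith
        · rw [hz2v, ← hv2def, abs_le]; constructor <;> linarith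
    · -- Ǩ¹ : ζ̌ near Λ⁰₁
      have htri2'' : A2 ≤ Real.exp (-v2) + Real.exp (-v1) := by linarith
      have hBe : v2 - s ≤ L := by rw [hLdef]; exact lem_e hε hε1 hA2l htri2'' hle
      set h' := min h2 s with hh'
      set l := (max s v1 - s)/b with hl
      set z1 : ℂ := mkC a b h' s with hz1
      set z2 : ℂ := z1 - (starRingEnd ℂ) (etaC a b) * (l:ℂ) with hz2
      have hz1v : z1.im = s := mkC_im a b h' s
      have hz1h : b * z1.re + a * z1.im = h' := mkC_hv a b h' s hb.ne'
      have hlnn : 0 ≤ l := by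
        rw [hl]; apply div_nonneg _ hb.le; linarith [le_max_left s v1]
      have hz2v : z2.im = max s v1 := by
        rw [hz2, im_sub_conj, hz1v, hl]; field_simp; ring
      have hz2h : b * z2.re + a * z2.im = h' := by rw [hz2, hv_sub_conj]; exact hz1h
      have hmem : z1 ∈ lam1Seg a b s := by
        apply mem_lam1 hb hz1v
        · rw [hz1h]; exact le_min hh2pos.le hs
        · rw [hz1h]; exact min_le_right _ _
      refine ⟨(z2, z1), Or.inl (Or.inl (Or.inr ⟨hmem, l, hlnn, hz2⟩)), ?_⟩
      have hminle : h' ≤ h2 := min_le_left _ _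
      have hminge : h2 - L ≤ h' := le_min (by linarith) (by linarith)
      have hmaxle : max s v1 ≤ v1 + L := max_le (by linarith) (by linarith)
      have hmaxge : v1 ≤ max s v1 := le_max_right _ _
      rw [Prod.dist_eq]
      apply max_le
      · refine dist_le_of hb p.1 z2 (H := 3*L) (V := 3*L) ?_ ?_
        · rw [hz2h, ← hh1def, abs_le]; constructor <;> linarith
        · rw [hz2v, ← hv1def, abs_le]; constructor <;> linarith
      · refine dist_le_of hb p.2 z1 (H := 3*L) (V := 3*L) ?_ ?_
        · rw [hz1h, ← hh2def, abs_le]; constructor <;> linarith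
        · rw [hz1v, ← hv2def, abs_le]; constructor <;> linarith
  · -- Case A : |ρ₂ - 1| ≤ ε only; solutions near K² ∪ Ǩ²
    rw [hr2] at hc2
    rw [hr1] at hnc1
    have hnc1' : ε < A1 * Real.exp h2 := not_le.1 hnc1
    have hAa : v2 - s ≤ L := by rw [hLdef]; exact lem_a hε hε1 hA2l hc2
    have hAb : |v1 - v2| ≤ L := by
      have hup : Real.exp (v2 - v1) ≤ 1 + ε := by
        rw [← habsr2]
        have h := norm_add_le (rho2 a b α β p - 1) 1
        have e : rho2 a b α β p - 1 + 1 = rho2 a b α β p := by ring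
        rw [e, norm_one, hr2] at h
        linarith
      have hlow : 1 - ε ≤ Real.exp (v2 - v1) := by
        rw [← habsr2]
        have h := norm_add_le (rho2 a b α β p) (1 - rho2 a b α β p)
        have e : rho2 a b α β p + (1 - rho2 a b α β p) = 1 := by ring
        rw [e, norm_one] at h
        have e2 : ‖(1 - rho2 a b α β p)‖ = ‖(rho2 a b α β p - 1)‖ :=
          norm_sub_rev _ _
        rw [e2, hr2] at h
        linarith
      have h := lem_b hε hε1 hlow hup
      rw [abs_sub_comm] at h
      rw [hLdef]; exact h
    have hAc : s - h2 ≤ L := by rw [hLdef]; exact lem_c hε hε1 hA1u hnc1'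
    have hAd : s - h1 ≤ L := by rw [hLdef]; exact lem_d hε hε1 hA1u hnc1' htri1
    obtain ⟨hAb1, hAb2⟩ := abs_le.1 hAb
    rcases le_total h1 h2 with hle | hle
    · -- K² : ζ near Λ⁰₂
      have hAe : h1 - s ≤ L := by rw [hLdef]; exact lem_e hε hε1 hA1l htri1' hle
      set v' := min v1 s with hv'
      set l := (max s h2 - s)/b with hl
      set z1 : ℂ := mkC a b s v' with hz1
      set z2 : ℂ := z1 + (l:ℂ) with hz2
      have hz1v : z1.im = v' := mkC_im a b s v'
      have hz1h : b * z1.re + a * z1.im = s := mkC_hv a b s v' hb.ne'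
      have hlnn : 0 ≤ l := by
        rw [hl]; apply div_nonneg _ hb.le; linarith [le_max_left s h2]
      have hz2v : z2.im = v' := by rw [hz2, im_add_real, hz1v]
      have hz2h : b * z2.re + a * z2.im = max s h2 := by
        rw [hz2, hv_add_real, hz1h, hl]; field_simp; ring
      have hmem : z1 ∈ lam2Seg a b s := by
        apply mem_lam2 hb
        · rw [hz1v]; exact le_min hv1pos.le hs
        · rw [hz1v]; exact min_le_right _ _
        · exact hz1h
      refine ⟨(z1, z2), Or.inl (Or.inr ⟨hmem, l, hlnn, hz2⟩), ?_⟩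
      have hminle : v' ≤ v1 := min_le_left _ _
      have hminge : v1 - 2*L ≤ v' := le_min (by linarith) (by linarith)
      have hmaxle : max s h2 ≤ h2 + L := max_le (by linarith) (by linarith)
      have hmaxge : h2 ≤ max s h2 := le_max_right _ _
      rw [Prod.dist_eq]
      apply max_le
      · refine dist_le_of hb p.1 z1 (H := 3*L) (V := 3*L) ?_ ?_
        · rw [hz1h, ← hh1def, abs_le]; constructor <;> linarith
        · rw [hz1v, ← hv1def, abs_le]; constructor <;> linarith
      · refine dist_le_of hb p.2 z2 (H := 3*L) (V := 3*L) ?_ ?_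
        · rw [hz2h, ← hh2def, abs_le]; constructor <;> linarith
        · rw [hz2v, ← hv2def, abs_le]; constructor <;> linarith
    · -- Ǩ² : ζ̌ near Λ⁰₂
      have htri1'' : A1 ≤ Real.exp (-h2) + Real.exp (-h1) := by linarith
      have hAe : h2 - s ≤ L := by rw [hLdef]; exact lem_e hε hε1 hA1l htri1'' hle
      set v' := min v2 s with hv'
      set l := (max s h1 - s)/b with hl
      set z1 : ℂ := mkC a b s v' with hz1
      set z2 : ℂ := z1 + (l:ℂ) with hz2
      have hz1v : z1.im = v' := mkC_im a b s v'
      have hz1h : b * z1.re + a * z1.im = s := mkC_hv a b s v' hb.ne'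
      have hlnn : 0 ≤ l := by
        rw [hl]; apply div_nonneg _ hb.le; linarith [le_max_left s h1]
      have hz2v : z2.im = v' := by rw [hz2, im_add_real, hz1v]
      have hz2h : b * z2.re + a * z2.im = max s h1 := by
        rw [hz2, hv_add_real, hz1h, hl]; field_simp; ring
      have hmem : z1 ∈ lam2Seg a b s := by
        apply mem_lam2 hb
        · rw [hz1v]; exact le_min hv2pos.le hs
        · rw [hz1v]; exact min_le_right _ _
        · exact hz1h
      refine ⟨(z2, z1), Or.inr ⟨hmem, l, hlnn, hz2⟩, ?_⟩
      have hminle : v' ≤ v2 := min_le_left _ _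
      have hminge : v2 - L ≤ v' := le_min (by linarith) (by linarith)
      have hmaxle : max s h1 ≤ h1 + L := max_le (by linarith) (by linarith)
      have hmaxge : h1 ≤ max s h1 := le_max_right _ _
      rw [Prod.dist_eq]
      apply max_le
      · refine dist_le_of hb p.1 z2 (H := 3*L) (V := 3*L) ?_ ?_
        · rw [hz2h, ← hh1def, abs_le]; constructor <;> linarith
        · rw [hz2v, ← hv1def, abs_le]; constructor <;> linarith
      · refine dist_le_of hb p.2 z1 (H := 3*L) (V := 3*L) ?_ ?_
        · rw [hz1h, ← hh2def, abs_le]; constructor <;> linarith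
        · rw [hz1v, ← hv2def, abs_le]; constructor <;> linarith
end
end

section
/- (1) For every compact subset K of ℂ⁴ there is a constant C_K > 0 such that for all λ ∈ ℂ with |λ| ≥ 1 and all admissible ζ = (ζ₁, ζ₂) with |ζ₁| ≤ |λ|^{-1}, the 4-dimensional area (with multiplicity) of a_λ(Γ_ζ) ∩ K, that is, the integral over {(z₁, w₁) ∈ 𝔻² : Ψ_{λ,ζ}(z₁, w₁) ∈ K} of the 4-dimensional area Jacobian of the parametrization Ψ_{λ,ζ}(z₁, w₁) := (λ z₁, λ f_ζ(z₁, w₁), w₁, φ_{ζ₂}(w₁)), is at most C_K. (2) There exists a ball W centered at the origin of ℂ⁴, depending only on κ₀, such that a_λ(Γ_ζ) ∩ W = ∅ for every pair (λ, ζ) with |λ| ≥ 1 and |ζ₁| > |λ|^{-1}. -/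
open MeasureTheory Metric Set Filter
open scoped ENNReal Topology

noncomputable section

/-- The parametrization `Ψ_{λ,ζ}(z₁, w₁) = (λz₁, λf_ζ(z₁,w₁), w₁, φ_{ζ₂}(w₁))` of the dilated
graph `a_λ(Γ_ζ)`, where `f_ζ(z₁,w₁) = φ_{ζ₁+ζ₂}(z₁+w₁) - φ_{ζ₂}(w₁)`. -/
def Psi (φ : ℂ → ℂ → ℂ) (lam ζ₁ ζ₂ z₁ w₁ : ℂ) : ℂ × ℂ × ℂ × ℂ :=
  (lam * z₁, lam * (φ (ζ₁ + ζ₂) (z₁ + w₁) - φ ζ₂ w₁), w₁, φ ζ₂ w₁)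

/-- The 4-dimensional area Jacobian of the holomorphic parametrization `Ψ_{λ,ζ}`: by
Wirtinger's theorem it is the sum of the squared absolute values of the `2 × 2` minors of the
complex Jacobian matrix of `Ψ_{λ,ζ}` (rows `(λ, 0)`, `(λ∂_z f, λ∂_w f)`, `(0,1)`, `(0, φ')`). -/
def areaJac (φ : ℂ → ℂ → ℂ) (lam ζ₁ ζ₂ z₁ w₁ : ℂ) : ℝ :=
  let fz := deriv (fun z => φ (ζ₁ + ζ₂) (z + w₁) - φ ζ₂ w₁) z₁
  let fw := deriv (fun w => φ (ζ₁ + ζ₂) (z₁ + w) - φ ζ₂ w) w₁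
  let dφ := deriv (φ ζ₂) w₁
  ‖lam ^ 2 * fw‖ ^ 2 + ‖lam‖ ^ 2 + ‖lam * dφ‖ ^ 2 +
    ‖lam * fz‖ ^ 2 + ‖lam * (fz * dφ)‖ ^ 2

/-- Schwarz-type estimate on a disc of radius `1/2`. -/
lemma schwarz_half {f : ℂ → ℂ} {c : ℂ} {B : ℝ}
    (hf : DifferentiableOn ℂ f (Metric.ball c (1/2)))
    (hB : ∀ y ∈ Metric.ball c (1/2), dist (f y) (f c) < B) :
    ‖deriv f c‖ ≤ 2 * B := by
  have h := Complex.norm_deriv_le_div_of_mapsTo_ball hf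
    (fun y hy => mem_closedBall.2 (hB y hy).le) (by norm_num : (0:ℝ) < 1/2)
  calc ‖deriv f c‖ ≤ B / (1/2) := h
    _ = 2 * B := by ring

lemma deriv_bound_aux {φ : ℂ → ℂ → ℂ}
    (hhol : ∀ α ∈ Metric.ball (0 : ℂ) 3, DifferentiableOn ℂ (φ α) (Metric.ball (0 : ℂ) 3))
    (hmaps : ∀ α ∈ Metric.ball (0 : ℂ) 3, ∀ t ∈ Metric.ball (0 : ℂ) 3,
      φ α t ∈ Metric.ball (0 : ℂ) 3)
    {α : ℂ} (hα : α ∈ Metric.ball (0 : ℂ) 3) {x : ℂ} (hx : x ∈ Metric.ball (0 : ℂ) (5/2)) :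
    ‖deriv (φ α) x‖ ≤ 12 := by
  have hx' := mem_ball_zero_iff.1 hx
  have hsub : Metric.ball x (1/2) ⊆ Metric.ball (0 : ℂ) 3 := by
    intro y hy
    have hy' : ‖y - x‖ < 1/2 := by rwa [mem_ball, dist_eq_norm] at hy
    rw [mem_ball_zero_iff]
    calc ‖y‖ = ‖(y - x) + x‖ := by ring_nf
      _ ≤ ‖y - x‖ + ‖x‖ := norm_add_le _ _
      _ < 3 := by linarith
  have h := schwarz_half (B := 6) ((hhol α hα).mono hsub) ?_
  · linarith
  · intro y hy
    have h1 := mem_ball_zero_iff.1 (hmaps α hα y (hsub hy))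
    have h2 := mem_ball_zero_iff.1 (hmaps α hα x (mem_ball_zero_iff.2 (by linarith)))
    calc dist (φ α y) (φ α x) = ‖φ α y - φ α x‖ := dist_eq_norm _ _
      _ ≤ ‖φ α y‖ + ‖φ α x‖ := norm_sub_le _ _
      _ < 6 := by linarith

lemma lip_bound_aux {φ : ℂ → ℂ → ℂ}
    (hhol : ∀ α ∈ Metric.ball (0 : ℂ) 3, DifferentiableOn ℂ (φ α) (Metric.ball (0 : ℂ) 3))
    (hmaps : ∀ α ∈ Metric.ball (0 : ℂ) 3, ∀ t ∈ Metric.ball (0 : ℂ) 3,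
      φ α t ∈ Metric.ball (0 : ℂ) 3)
    {α : ℂ} (hα : α ∈ Metric.ball (0 : ℂ) 3) {x y : ℂ}
    (hx : x ∈ Metric.ball (0 : ℂ) (5/2)) (hy : y ∈ Metric.ball (0 : ℂ) (5/2)) :
    ‖φ α x - φ α y‖ ≤ 12 * ‖x - y‖ := by
  have hsub : Metric.ball (0 : ℂ) (5/2) ⊆ Metric.ball (0 : ℂ) 3 :=
    ball_subset_ball (by norm_num)
  exact Convex.norm_image_sub_le_of_norm_deriv_le
    (fun z hz => (hhol α hα).differentiableAt (isOpen_ball.mem_nhds (hsub hz)))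
    (fun z hz => deriv_bound_aux hhol hmaps hα hz) (convex_ball _ _) hy hx

set_option maxHeartbeats 1000000 in
/-- (1) the 4-dimensional area (with multiplicity) of `a_λ(Γ_ζ)` in any compact
set `K ⊂ ℂ⁴` is bounded uniformly in `(λ, ζ)` with `|λ| ≥ 1` and `|ζ₁| ≤ |λ|⁻¹`;
(2) there is a ball `W` centered at `0 ∈ ℂ⁴` avoided by `a_λ(Γ_ζ)` whenever `|ζ₁| > |λ|⁻¹`. -/
theorem stmt17 (κ₀ : ℝ) (hκ₀ : 1 ≤ κ₀) (φ : ℂ → ℂ → ℂ)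
    (hhol : ∀ α ∈ Metric.ball (0 : ℂ) 3, DifferentiableOn ℂ (φ α) (Metric.ball (0 : ℂ) 3))
    (hmaps : ∀ α ∈ Metric.ball (0 : ℂ) 3, ∀ t ∈ Metric.ball (0 : ℂ) 3,
      φ α t ∈ Metric.ball (0 : ℂ) 3)
    (hzero : ∀ α ∈ Metric.ball (0 : ℂ) 3, φ α 0 = α)
    (hlip : ∀ t ∈ Metric.ball (0 : ℂ) 3, ∀ α ∈ Metric.ball (0 : ℂ) 3,
      ∀ β ∈ Metric.ball (0 : ℂ) 3,
      κ₀⁻¹ * ‖α - β‖ ≤ ‖φ α t - φ β t‖ ∧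
        ‖φ α t - φ β t‖ ≤ κ₀ * ‖α - β‖) :
    -- (1) bounded area on compact sets, uniformly for |ζ₁| ≤ |λ|⁻¹
    (∀ K : Set (ℂ × ℂ × ℂ × ℂ), IsCompact K →
      ∃ C : ℝ, 0 < C ∧
        ∀ lam : ℂ, 1 ≤ ‖lam‖ →
          ∀ ζ₁ ζ₂ : ℂ, ζ₂ ∈ Metric.ball (0 : ℂ) 3 → ζ₁ + ζ₂ ∈ Metric.ball (0 : ℂ) 3 →
            ‖ζ₁‖ ≤ (‖lam‖)⁻¹ →
            (∫⁻ p in {p : ℂ × ℂ | ‖p.1‖ < 1 ∧ ‖p.2‖ < 1 ∧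
                Psi φ lam ζ₁ ζ₂ p.1 p.2 ∈ K},
              ENNReal.ofReal (areaJac φ lam ζ₁ ζ₂ p.1 p.2)) ≤ ENNReal.ofReal C) ∧
    -- (2) a ball W around the origin avoided when |ζ₁| > |λ|⁻¹
    (∃ r : ℝ, 0 < r ∧
      ∀ lam : ℂ, 1 ≤ ‖lam‖ →
        ∀ ζ₁ ζ₂ : ℂ, ζ₂ ∈ Metric.ball (0 : ℂ) 3 → ζ₁ + ζ₂ ∈ Metric.ball (0 : ℂ) 3 →
          (‖lam‖)⁻¹ < ‖ζ₁‖ →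
          ∀ z₁ ∈ Metric.ball (0 : ℂ) 1, ∀ w₁ ∈ Metric.ball (0 : ℂ) 1,
            Psi φ lam ζ₁ ζ₂ z₁ w₁ ∉ Metric.ball (0 : ℂ × ℂ × ℂ × ℂ) r) := by
  have hκpos : (0:ℝ) < κ₀ := lt_of_lt_of_le one_pos hκ₀
  constructor
  · -- Part (1)
    intro K hK
    obtain ⟨R₀, hR₀⟩ := hK.isBounded.subset_closedBall 0
    set R : ℝ := max R₀ 1 with hRdef
    have hR1 : (1:ℝ) ≤ R := le_max_right _ _
    have hR0 : (0:ℝ) < R := lt_of_lt_of_le one_pos hR1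
    have hKR : K ⊆ Metric.closedBall 0 R :=
      hR₀.trans (Metric.closedBall_subset_closedBall (le_max_left _ _))
    set C₁ : ℝ := 4 * κ₀ + 48 * R + 2 with hC₁def
    set C₂ : ℝ := C₁ ^ 2 + 21025 with hC₂def
    have hC₁pos : 0 < C₁ := by positivity
    have hC₂pos : 0 < C₂ := by positivity
    refine ⟨C₂ * R ^ 2 * (Real.pi * Real.pi) + 1, by positivity, ?_⟩
    intro lam hlam ζ₁ ζ₂ hζ₂ hζ₁₂ hζ₁small
    have hL : (1:ℝ) ≤ ‖lam‖ := by exact hlam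
    have hL0 : (0:ℝ) < ‖lam‖ := lt_of_lt_of_le one_pos hL
    have hζ₁n : ‖ζ₁‖ ≤ ‖lam‖⁻¹ := by
      exact hζ₁small
    -- the constraint set
    set S : Set (ℂ × ℂ) := {p : ℂ × ℂ | ‖p.1‖ < 1 ∧ ‖p.2‖ < 1 ∧
        Psi φ lam ζ₁ ζ₂ p.1 p.2 ∈ K} with hSdef
    -- basic facts about points of S
    have hz₁bound : ∀ p ∈ S, ‖lam‖ * ‖p.1‖ ≤ R := by
      rintro ⟨z₁, w₁⟩ ⟨hp1, hp2, hpK⟩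
      have hPsiR : ‖Psi φ lam ζ₁ ζ₂ z₁ w₁‖ ≤ R := mem_closedBall_zero_iff.1 (hKR hpK)
      have h1 : ‖lam * z₁‖ ≤ R := le_trans (norm_fst_le (Psi φ lam ζ₁ ζ₂ z₁ w₁)) hPsiR
      rwa [norm_mul] at h1
    -- pointwise bound on the Jacobian
    have hpt : ∀ p ∈ S, ENNReal.ofReal (areaJac φ lam ζ₁ ζ₂ p.1 p.2) ≤
        ENNReal.ofReal (C₂ * ‖lam‖ ^ 2) := by
      rintro ⟨z₁, w₁⟩ hp
      obtain ⟨hp1, hp2, hpK⟩ := hp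
      apply ENNReal.ofReal_le_ofReal
      have hz₁ : ‖z₁‖ < 1 := by exact hp1
      have hw₁ : ‖w₁‖ < 1 := by exact hp2
      have hz₁R : ‖lam‖ * ‖z₁‖ ≤ R := hz₁bound ⟨z₁, w₁⟩ ⟨hp1, hp2, hpK⟩
      have hz₁R' : ‖z₁‖ ≤ R / ‖lam‖ := by
        rw [le_div_iff₀ hL0]; rw [mul_comm] at hz₁R; exact hz₁R
      -- bound on ∂φ/∂w
      have hdφ : ‖deriv (φ ζ₂) w₁‖ ≤ 12 :=
        deriv_bound_aux hhol hmaps hζ₂ (mem_ball_zero_iff.2 (by linarith))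
      -- bound on f_z
      have hfz : ‖deriv (fun z => φ (ζ₁ + ζ₂) (z + w₁) - φ ζ₂ w₁) z₁‖ ≤ 12 := by
        have hmem3 : ∀ z : ℂ, z ∈ Metric.ball z₁ (1/2) → z + w₁ ∈ Metric.ball (0:ℂ) 3 := by
          intro z hz
          have hz' : ‖z - z₁‖ < 1/2 := by rwa [mem_ball, dist_eq_norm] at hz
          rw [mem_ball_zero_iff]
          calc ‖z + w₁‖ = ‖(z - z₁) + (z₁ + w₁)‖ := by ring_nf
            _ ≤ ‖z - z₁‖ + ‖z₁ + w₁‖ := norm_add_le _ _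
            _ ≤ ‖z - z₁‖ + (‖z₁‖ + ‖w₁‖) := by linarith [norm_add_le z₁ w₁]
            _ < 3 := by linarith
        have hdiff : DifferentiableOn ℂ (fun z => φ (ζ₁ + ζ₂) (z + w₁) - φ ζ₂ w₁)
            (Metric.ball z₁ (1/2)) := by
          intro z hz
          have h1 : DifferentiableAt ℂ (fun z => φ (ζ₁ + ζ₂) (z + w₁)) z :=
            DifferentiableAt.comp z
              ((hhol _ hζ₁₂).differentiableAt (isOpen_ball.mem_nhds (hmem3 z hz)))
              (differentiableAt_id.add_const w₁)
          exact (h1.sub_const _).differentiableWithinAt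
        have hB : ∀ y ∈ Metric.ball z₁ (1/2),
            dist ((fun z => φ (ζ₁ + ζ₂) (z + w₁) - φ ζ₂ w₁) y)
              ((fun z => φ (ζ₁ + ζ₂) (z + w₁) - φ ζ₂ w₁) z₁) < 6 := by
          intro y hy
          have h1 := mem_ball_zero_iff.1 (hmaps _ hζ₁₂ _ (hmem3 y hy))
          have h2 := mem_ball_zero_iff.1
            (hmaps _ hζ₁₂ _ (hmem3 z₁ (mem_ball_self (by norm_num))))
          rw [dist_eq_norm]
          calc ‖(φ (ζ₁ + ζ₂) (y + w₁) - φ ζ₂ w₁) - (φ (ζ₁ + ζ₂) (z₁ + w₁) - φ ζ₂ w₁)‖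
              = ‖φ (ζ₁ + ζ₂) (y + w₁) - φ (ζ₁ + ζ₂) (z₁ + w₁)‖ := by ring_nf
            _ ≤ ‖φ (ζ₁ + ζ₂) (y + w₁)‖ + ‖φ (ζ₁ + ζ₂) (z₁ + w₁)‖ := norm_sub_le _ _
            _ < 6 := by linarith
        have := schwarz_half hdiff hB
        linarith
      -- bound on f_w
      have hfw : ‖lam‖ * ‖deriv (fun w => φ (ζ₁ + ζ₂) (z₁ + w) - φ ζ₂ w) w₁‖ ≤ C₁ := by
        have hwmem : ∀ w : ℂ, w ∈ Metric.ball w₁ (1/2) →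
            ‖w‖ < 3/2 ∧ z₁ + w ∈ Metric.ball (0:ℂ) 3 ∧ w ∈ Metric.ball (0:ℂ) 3 ∧
            ‖z₁ + w‖ < 5/2 := by
          intro w hw
          have hw' : ‖w - w₁‖ < 1/2 := by rwa [mem_ball, dist_eq_norm] at hw
          have h1 : ‖w‖ < 3/2 := by
            calc ‖w‖ = ‖(w - w₁) + w₁‖ := by ring_nf
              _ ≤ ‖w - w₁‖ + ‖w₁‖ := norm_add_le _ _
              _ < 3/2 := by linarith
          have h2 : ‖z₁ + w‖ < 5/2 := by
            calc ‖z₁ + w‖ ≤ ‖z₁‖ + ‖w‖ := norm_add_le _ _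
              _ < 5/2 := by linarith
          exact ⟨h1, mem_ball_zero_iff.2 (by linarith), mem_ball_zero_iff.2 (by linarith), h2⟩
        have hMb : ∀ w ∈ Metric.ball w₁ (1/2),
            ‖φ (ζ₁ + ζ₂) (z₁ + w) - φ ζ₂ w‖ ≤ (κ₀ + 12 * R) / ‖lam‖ := by
          intro w hw
          obtain ⟨h1, h2, h3, h4⟩ := hwmem w hw
          have e1 : ‖φ (ζ₁ + ζ₂) (z₁ + w) - φ ζ₂ (z₁ + w)‖ ≤ κ₀ * ‖ζ₁‖ := by
            have := (hlip (z₁ + w) h2 (ζ₁ + ζ₂) hζ₁₂ ζ₂ hζ₂).2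
            rw [add_sub_cancel_right] at this
            exact this
          have e2 : ‖φ ζ₂ (z₁ + w) - φ ζ₂ w‖ ≤ 12 * ‖z₁‖ := by
            have := lip_bound_aux hhol hmaps hζ₂ (x := z₁ + w) (y := w)
              (mem_ball_zero_iff.2 h4) (mem_ball_zero_iff.2 (by linarith))
            simpa [add_sub_cancel_right] using this
          have e3 : κ₀ * ‖ζ₁‖ ≤ κ₀ * ‖lam‖⁻¹ :=
            mul_le_mul_of_nonneg_left hζ₁n hκpos.le
          have e4 : 12 * ‖z₁‖ ≤ 12 * (R / ‖lam‖) := by linarith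
          calc ‖φ (ζ₁ + ζ₂) (z₁ + w) - φ ζ₂ w‖
              = ‖(φ (ζ₁ + ζ₂) (z₁ + w) - φ ζ₂ (z₁ + w)) + (φ ζ₂ (z₁ + w) - φ ζ₂ w)‖ := by
                ring_nf
            _ ≤ ‖φ (ζ₁ + ζ₂) (z₁ + w) - φ ζ₂ (z₁ + w)‖ + ‖φ ζ₂ (z₁ + w) - φ ζ₂ w‖ :=
                norm_add_le _ _
            _ ≤ κ₀ * ‖lam‖⁻¹ + 12 * (R / ‖lam‖) := by linarith
            _ = (κ₀ + 12 * R) / ‖lam‖ := by field_simp; try ring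
        have hdiff : DifferentiableOn ℂ (fun w => φ (ζ₁ + ζ₂) (z₁ + w) - φ ζ₂ w)
            (Metric.ball w₁ (1/2)) := by
          intro w hw
          obtain ⟨h1, h2, h3, h4⟩ := hwmem w hw
          have hd1 : DifferentiableAt ℂ (fun w => φ (ζ₁ + ζ₂) (z₁ + w)) w :=
            DifferentiableAt.comp w
              ((hhol _ hζ₁₂).differentiableAt (isOpen_ball.mem_nhds h2))
              (differentiableAt_id.const_add z₁)
          have hd2 : DifferentiableAt ℂ (φ ζ₂) w :=
            (hhol _ hζ₂).differentiableAt (isOpen_ball.mem_nhds h3)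
          exact (hd1.sub hd2).differentiableWithinAt
        set M : ℝ := (κ₀ + 12 * R) / ‖lam‖ with hMdef
        have hB : ∀ y ∈ Metric.ball w₁ (1/2),
            dist ((fun w => φ (ζ₁ + ζ₂) (z₁ + w) - φ ζ₂ w) y)
              ((fun w => φ (ζ₁ + ζ₂) (z₁ + w) - φ ζ₂ w) w₁) < 2 * M + 1 / ‖lam‖ := by
          intro y hy
          have hy1 := hMb y hy
          have hy2 := hMb w₁ (mem_ball_self (by norm_num))
          have hpos : 0 < 1 / ‖lam‖ := by positivity
          rw [dist_eq_norm]
          calc ‖(φ (ζ₁ + ζ₂) (z₁ + y) - φ ζ₂ y) - (φ (ζ₁ + ζ₂) (z₁ + w₁) - φ ζ₂ w₁)‖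
              ≤ ‖φ (ζ₁ + ζ₂) (z₁ + y) - φ ζ₂ y‖ + ‖φ (ζ₁ + ζ₂) (z₁ + w₁) - φ ζ₂ w₁‖ :=
                norm_sub_le _ _
            _ < 2 * M + 1 / ‖lam‖ := by linarith
        have hd := schwarz_half hdiff hB
        calc ‖lam‖ * ‖deriv (fun w => φ (ζ₁ + ζ₂) (z₁ + w) - φ ζ₂ w) w₁‖
            ≤ ‖lam‖ * (2 * (2 * M + 1 / ‖lam‖)) := mul_le_mul_of_nonneg_left hd hL0.le
          _ = C₁ := by rw [hMdef, hC₁def]; field_simp; try ring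
      -- assemble
      simp only [areaJac, norm_mul, norm_pow]
      set a : ℝ := ‖deriv (fun z => φ (ζ₁ + ζ₂) (z + w₁) - φ ζ₂ w₁) z₁‖ with hadef
      set b : ℝ := ‖deriv (φ ζ₂) w₁‖ with hbdef
      set c : ℝ := ‖deriv (fun w => φ (ζ₁ + ζ₂) (z₁ + w) - φ ζ₂ w) w₁‖ with hcdef
      have ha0 : 0 ≤ a := norm_nonneg _
      have hb0 : 0 ≤ b := norm_nonneg _
      have hc0 : 0 ≤ c := norm_nonneg _
      have t1 : (‖lam‖ ^ 2 * c) ^ 2 ≤ C₁ ^ 2 * ‖lam‖ ^ 2 := by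
        have h1 : (‖lam‖ * c) ^ 2 ≤ C₁ ^ 2 :=
          pow_le_pow_left₀ (by positivity) hfw 2
        calc (‖lam‖ ^ 2 * c) ^ 2 = (‖lam‖ * c) ^ 2 * ‖lam‖ ^ 2 := by ring
          _ ≤ C₁ ^ 2 * ‖lam‖ ^ 2 := mul_le_mul_of_nonneg_right h1 (sq_nonneg _)
      have t2 : (‖lam‖ * b) ^ 2 ≤ 144 * ‖lam‖ ^ 2 := by
        have hb2 : b ^ 2 ≤ 144 := by nlinarith
        calc (‖lam‖ * b) ^ 2 = b ^ 2 * ‖lam‖ ^ 2 := by ring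
          _ ≤ 144 * ‖lam‖ ^ 2 := mul_le_mul_of_nonneg_right hb2 (sq_nonneg _)
      have t3 : (‖lam‖ * a) ^ 2 ≤ 144 * ‖lam‖ ^ 2 := by
        have ha2 : a ^ 2 ≤ 144 := by nlinarith
        calc (‖lam‖ * a) ^ 2 = a ^ 2 * ‖lam‖ ^ 2 := by ring
          _ ≤ 144 * ‖lam‖ ^ 2 := mul_le_mul_of_nonneg_right ha2 (sq_nonneg _)
      have t4 : (‖lam‖ * (a * b)) ^ 2 ≤ 20736 * ‖lam‖ ^ 2 := by
        have ha2 : a ^ 2 ≤ 144 := by nlinarith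
        have hb2 : b ^ 2 ≤ 144 := by nlinarith
        have : a ^ 2 * b ^ 2 ≤ 144 * 144 :=
          mul_le_mul ha2 hb2 (sq_nonneg _) (by norm_num)
        calc (‖lam‖ * (a * b)) ^ 2 = (a ^ 2 * b ^ 2) * ‖lam‖ ^ 2 := by ring
          _ ≤ (144 * 144) * ‖lam‖ ^ 2 := mul_le_mul_of_nonneg_right this (sq_nonneg _)
          _ = 20736 * ‖lam‖ ^ 2 := by norm_num
      have hCeq : C₂ * ‖lam‖ ^ 2 = C₁ ^ 2 * ‖lam‖ ^ 2 + ‖lam‖ ^ 2 + 144 * ‖lam‖ ^ 2 +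
          144 * ‖lam‖ ^ 2 + 20736 * ‖lam‖ ^ 2 := by rw [hC₂def]; ring
      linarith [t1, t2, t3, t4]
    -- containment in a thin product set
    have hST : S ⊆ (Metric.closedBall (0:ℂ) (R / ‖lam‖)) ×ˢ (Metric.closedBall (0:ℂ) 1) := by
      rintro ⟨z₁, w₁⟩ hp
      obtain ⟨hp1, hp2, hpK⟩ := hp
      have h1 : ‖lam‖ * ‖z₁‖ ≤ R := hz₁bound ⟨z₁, w₁⟩ ⟨hp1, hp2, hpK⟩
      constructor
      · rw [mem_closedBall_zero_iff, le_div_iff₀ hL0]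
        rw [mul_comm] at h1; exact h1
      · rw [mem_closedBall_zero_iff]
        exact hp2.le
    have hpi : (NNReal.pi : ℝ≥0∞) = ENNReal.ofReal Real.pi := by
      rw [← NNReal.coe_real_pi, ENNReal.ofReal_coe_nnreal]
    have hvol : volume ((Metric.closedBall (0:ℂ) (R / ‖lam‖)) ×ˢ
        (Metric.closedBall (0:ℂ) 1)) =
        ENNReal.ofReal ((R / ‖lam‖) ^ 2 * (Real.pi * Real.pi)) := by
      rw [Measure.volume_eq_prod, Measure.prod_prod, Complex.volume_closedBall,
        Complex.volume_closedBall, hpi, ← ENNReal.ofReal_pow (by positivity),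
        ← ENNReal.ofReal_pow zero_le_one, ← ENNReal.ofReal_mul (by positivity),
        ← ENNReal.ofReal_mul (by positivity), ← ENNReal.ofReal_mul (by positivity)]
      congr 1
      norm_num
      ring
    calc (∫⁻ p in S, ENNReal.ofReal (areaJac φ lam ζ₁ ζ₂ p.1 p.2))
        ≤ ∫⁻ _ in S, ENNReal.ofReal (C₂ * ‖lam‖ ^ 2) := setLIntegral_mono measurable_const hpt
      _ = ENNReal.ofReal (C₂ * ‖lam‖ ^ 2) * volume S := setLIntegral_const _ _
      _ ≤ ENNReal.ofReal (C₂ * ‖lam‖ ^ 2) * volume ((Metric.closedBall (0:ℂ) (R / ‖lam‖)) ×ˢ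
            (Metric.closedBall (0:ℂ) 1)) := mul_le_mul_right (measure_mono hST) _
      _ = ENNReal.ofReal (C₂ * ‖lam‖ ^ 2 * ((R / ‖lam‖) ^ 2 * (Real.pi * Real.pi))) := by
            rw [hvol, ← ENNReal.ofReal_mul (by positivity)]
      _ ≤ ENNReal.ofReal (C₂ * R ^ 2 * (Real.pi * Real.pi) + 1) := by
            apply ENNReal.ofReal_le_ofReal
            have hEq : C₂ * ‖lam‖ ^ 2 * ((R / ‖lam‖) ^ 2 * (Real.pi * Real.pi)) =
                C₂ * R ^ 2 * (Real.pi * Real.pi) := by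
              field_simp
            rw [hEq]
            exact le_add_of_nonneg_right zero_le_one
  · -- Part (2)
    refine ⟨1 / (13 * κ₀), by positivity, ?_⟩
    intro lam hlam ζ₁ ζ₂ hζ₂ hζ₁₂ hbig z₁ hz₁ w₁ hw₁ hmem
    have hL : (1:ℝ) ≤ ‖lam‖ := by exact hlam
    have hL0 : (0:ℝ) < ‖lam‖ := lt_of_lt_of_le one_pos hL
    have hbig' : ‖lam‖⁻¹ < ‖ζ₁‖ := by
      exact hbig
    have hz₁' : ‖z₁‖ < 1 := mem_ball_zero_iff.1 hz₁
    have hw₁' : ‖w₁‖ < 1 := mem_ball_zero_iff.1 hw₁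
    have hnorm : ‖Psi φ lam ζ₁ ζ₂ z₁ w₁‖ < 1 / (13 * κ₀) := mem_ball_zero_iff.1 hmem
    have h1 : ‖lam‖ * ‖z₁‖ < 1 / (13 * κ₀) := by
      have := le_trans (norm_fst_le (Psi φ lam ζ₁ ζ₂ z₁ w₁)) hnorm.le
      have h1' : ‖lam * z₁‖ < 1 / (13 * κ₀) :=
        lt_of_le_of_lt (norm_fst_le (Psi φ lam ζ₁ ζ₂ z₁ w₁)) hnorm
      rwa [norm_mul] at h1'
    have h2 : ‖lam‖ * ‖φ (ζ₁ + ζ₂) (z₁ + w₁) - φ ζ₂ w₁‖ < 1 / (13 * κ₀) := by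
      have h2' : ‖lam * (φ (ζ₁ + ζ₂) (z₁ + w₁) - φ ζ₂ w₁)‖ < 1 / (13 * κ₀) :=
        lt_of_le_of_lt (le_trans (norm_fst_le ((Psi φ lam ζ₁ ζ₂ z₁ w₁).2)) (norm_snd_le (Psi φ lam ζ₁ ζ₂ z₁ w₁))) hnorm
      rwa [norm_mul] at h2'
    have hkey : κ₀⁻¹ * ‖ζ₁‖ ≤ ‖φ (ζ₁ + ζ₂) w₁ - φ ζ₂ w₁‖ := by
      have := (hlip w₁ (mem_ball_zero_iff.2 (by linarith)) (ζ₁ + ζ₂) hζ₁₂ ζ₂ hζ₂).1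
      rw [add_sub_cancel_right] at this
      exact this
    have hlipz : ‖φ (ζ₁ + ζ₂) (z₁ + w₁) - φ (ζ₁ + ζ₂) w₁‖ ≤ 12 * ‖z₁‖ := by
      have hmem1 : z₁ + w₁ ∈ Metric.ball (0:ℂ) (5/2) := by
        rw [mem_ball_zero_iff]
        calc ‖z₁ + w₁‖ ≤ ‖z₁‖ + ‖w₁‖ := norm_add_le _ _
          _ < 5/2 := by linarith
      have hmem2 : w₁ ∈ Metric.ball (0:ℂ) (5/2) := mem_ball_zero_iff.2 (by linarith)
      have := lip_bound_aux hhol hmaps hζ₁₂ hmem1 hmem2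
      simpa [add_sub_cancel_right] using this
    have htri : ‖φ (ζ₁ + ζ₂) w₁ - φ ζ₂ w₁‖ ≤
        ‖φ (ζ₁ + ζ₂) (z₁ + w₁) - φ ζ₂ w₁‖ + ‖φ (ζ₁ + ζ₂) (z₁ + w₁) - φ (ζ₁ + ζ₂) w₁‖ := by
      have heq : φ (ζ₁ + ζ₂) w₁ - φ ζ₂ w₁ =
          (φ (ζ₁ + ζ₂) (z₁ + w₁) - φ ζ₂ w₁) - (φ (ζ₁ + ζ₂) (z₁ + w₁) - φ (ζ₁ + ζ₂) w₁) := by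
        ring
      rw [heq]
      exact norm_sub_le _ _
    have hinv : (0:ℝ) < κ₀⁻¹ := inv_pos.2 hκpos
    have hζ₁L : 1 < ‖lam‖ * ‖ζ₁‖ := by
      calc (1:ℝ) = ‖lam‖ * ‖lam‖⁻¹ := (mul_inv_cancel₀ hL0.ne').symm
        _ < ‖lam‖ * ‖ζ₁‖ := by exact mul_lt_mul_of_pos_left hbig' hL0
    have a1 : κ₀⁻¹ * (‖lam‖ * ‖ζ₁‖) ≤ ‖lam‖ * ‖φ (ζ₁ + ζ₂) w₁ - φ ζ₂ w₁‖ := by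
      calc κ₀⁻¹ * (‖lam‖ * ‖ζ₁‖) = ‖lam‖ * (κ₀⁻¹ * ‖ζ₁‖) := by ring
        _ ≤ ‖lam‖ * ‖φ (ζ₁ + ζ₂) w₁ - φ ζ₂ w₁‖ := mul_le_mul_of_nonneg_left hkey hL0.le
    have a2 : ‖lam‖ * ‖φ (ζ₁ + ζ₂) w₁ - φ ζ₂ w₁‖ ≤
        ‖lam‖ * ‖φ (ζ₁ + ζ₂) (z₁ + w₁) - φ ζ₂ w₁‖ + 12 * (‖lam‖ * ‖z₁‖) := by
      have htri' : ‖φ (ζ₁ + ζ₂) w₁ - φ ζ₂ w₁‖ ≤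
          ‖φ (ζ₁ + ζ₂) (z₁ + w₁) - φ ζ₂ w₁‖ + 12 * ‖z₁‖ := by linarith
      calc ‖lam‖ * ‖φ (ζ₁ + ζ₂) w₁ - φ ζ₂ w₁‖
          ≤ ‖lam‖ * (‖φ (ζ₁ + ζ₂) (z₁ + w₁) - φ ζ₂ w₁‖ + 12 * ‖z₁‖) :=
            mul_le_mul_of_nonneg_left htri' hL0.le
        _ = ‖lam‖ * ‖φ (ζ₁ + ζ₂) (z₁ + w₁) - φ ζ₂ w₁‖ + 12 * (‖lam‖ * ‖z₁‖) := by ring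
    have a5 : κ₀⁻¹ < κ₀⁻¹ * (‖lam‖ * ‖ζ₁‖) := by
      calc κ₀⁻¹ = κ₀⁻¹ * 1 := (mul_one _).symm
        _ < κ₀⁻¹ * (‖lam‖ * ‖ζ₁‖) := mul_lt_mul_of_pos_left hζ₁L hinv
    have hr : 13 * (1 / (13 * κ₀)) = κ₀⁻¹ := by field_simp
    linarith
end
end
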